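/- Let m ∈ (0,4], α > 0 and κ ≥ 0. Let f : [0, Y) → ℝ (Y > 0) be a four-times continuously differentiable function with f > 0, satisfying the self-similar profile equation α·(f − y f') + m f^{m−1} f' f''' + f^m f'''' = 0 on (0, Y) and the initial conditions f(0) = 1, f'(0) = 0, f''(0) = κ, f'''(0) = 0. If f'(y*) < 0 for some y* ∈ (0, Y), then the Σ₋ condition holds at y*: y*·f'(y*) < f(y*), f''(y*) < 0 and f'''(y*) < 0. -/

import Mathlib

open Set Filter Topology MeasureTheory

noncomputable section

lemma myMono {F F' : ℝ → ℝ} {a b : ℝ} (hc : ContinuousOn F (Icc a b))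
    (hd : ∀ x ∈ Ioo a b, HasDerivAt F (F' x) x)
    (h0 : ∀ x ∈ Ioo a b, 0 ≤ F' x) : MonotoneOn F (Icc a b) := by
  apply monotoneOn_of_deriv_nonneg (convex_Icc a b) hc
  · intro x hx; rw [interior_Icc] at hx
    exact (hd x hx).differentiableAt.differentiableWithinAt
  · intro x hx; rw [interior_Icc] at hx
    rw [(hd x hx).deriv]; exact h0 x hx

lemma myAnti {F F' : ℝ → ℝ} {a b : ℝ} (hc : ContinuousOn F (Icc a b))
    (hd : ∀ x ∈ Ioo a b, HasDerivAt F (F' x) x)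
    (h0 : ∀ x ∈ Ioo a b, F' x ≤ 0) : AntitoneOn F (Icc a b) := by
  apply antitoneOn_of_deriv_nonpos (convex_Icc a b) hc
  · intro x hx; rw [interior_Icc] at hx
    exact (hd x hx).differentiableAt.differentiableWithinAt
  · intro x hx; rw [interior_Icc] at hx
    rw [(hd x hx).deriv]; exact h0 x hx

lemma myStrictMono {F F' : ℝ → ℝ} {a b : ℝ} (hc : ContinuousOn F (Icc a b))
    (hd : ∀ x ∈ Ioo a b, HasDerivAt F (F' x) x)
    (h0 : ∀ x ∈ Ioo a b, 0 < F' x) : StrictMonoOn F (Icc a b) := by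
  apply strictMonoOn_of_deriv_pos (convex_Icc a b) hc
  intro x hx; rw [interior_Icc] at hx
  rw [(hd x hx).deriv]; exact h0 x hx

lemma myStrictAnti {F F' : ℝ → ℝ} {a b : ℝ} (hc : ContinuousOn F (Icc a b))
    (hd : ∀ x ∈ Ioo a b, HasDerivAt F (F' x) x)
    (h0 : ∀ x ∈ Ioo a b, F' x < 0) : StrictAntiOn F (Icc a b) := by
  apply strictAntiOn_of_deriv_neg (convex_Icc a b) hc
  intro x hx; rw [interior_Icc] at hx
  rw [(hd x hx).deriv]; exact h0 x hx


/-- `f` is four-times continuously differentiable on `s`, with successive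
derivatives `f1`, `f2`, `f3`, `f4`. -/
def C4On (s : Set ℝ) (f f1 f2 f3 f4 : ℝ → ℝ) : Prop :=
  (∀ y ∈ s, HasDerivWithinAt f (f1 y) s y) ∧
  (∀ y ∈ s, HasDerivWithinAt f1 (f2 y) s y) ∧
  (∀ y ∈ s, HasDerivWithinAt f2 (f3 y) s y) ∧
  (∀ y ∈ s, HasDerivWithinAt f3 (f4 y) s y) ∧
  ContinuousOn f4 s

/-- The self-similar profile ODE
`α (f − y f') + m f^(m−1) f' f''' + f^m f'''' = 0` on the set `s`,
for a function `f` with successive derivatives `f1`, `f3`, `f4`. -/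
def ProfileODE (m α : ℝ) (s : Set ℝ) (f f1 f3 f4 : ℝ → ℝ) : Prop :=
  ∀ y ∈ s,
    α * (f y - y * f1 y) + m * f y ^ (m - 1) * f1 y * f3 y + f y ^ m * f4 y = 0

set_option maxHeartbeats 1600000 in
theorem stmt12 (m α κ : ℝ) (hm0 : 0 < m) (hm4 : m ≤ 4) (hα : 0 < α) (hκ : 0 ≤ κ)
    (Y : ℝ) (hY : 0 < Y) (f f1 f2 f3 f4 : ℝ → ℝ)
    (hC4 : C4On (Ico 0 Y) f f1 f2 f3 f4)
    (hpos : ∀ y ∈ Ico (0 : ℝ) Y, 0 < f y)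
    (hODE : ProfileODE m α (Ioo 0 Y) f f1 f3 f4)
    (hf0 : f 0 = 1) (hf1 : f1 0 = 0) (hf2 : f2 0 = κ) (hf3 : f3 0 = 0)
    (ys : ℝ) (hys : ys ∈ Ioo (0 : ℝ) Y) (hneg : f1 ys < 0) :
    ys * f1 ys < f ys ∧ f2 ys < 0 ∧ f3 ys < 0 := by
  obtain ⟨hys0, hysY⟩ := hys
  obtain ⟨hD0, hD1, hD2, hD3, hCf4⟩ := hC4
  have hmem : ∀ {x : ℝ}, x ∈ Ioo (0:ℝ) Y → x ∈ Ico (0:ℝ) Y := fun hx => ⟨le_of_lt hx.1, hx.2⟩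
  have hnhds : ∀ {x : ℝ}, x ∈ Ioo (0:ℝ) Y → Ico (0:ℝ) Y ∈ 𝓝 x :=
    fun hx => mem_of_superset (Ioo_mem_nhds hx.1 hx.2) Ioo_subset_Ico_self
  have hdf : ∀ x ∈ Ioo (0:ℝ) Y, HasDerivAt f (f1 x) x :=
    fun x hx => (hD0 x (hmem hx)).hasDerivAt (hnhds hx)
  have hdf1 : ∀ x ∈ Ioo (0:ℝ) Y, HasDerivAt f1 (f2 x) x :=
    fun x hx => (hD1 x (hmem hx)).hasDerivAt (hnhds hx)
  have hdf2 : ∀ x ∈ Ioo (0:ℝ) Y, HasDerivAt f2 (f3 x) x :=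
    fun x hx => (hD2 x (hmem hx)).hasDerivAt (hnhds hx)
  have hdf3 : ∀ x ∈ Ioo (0:ℝ) Y, HasDerivAt f3 (f4 x) x :=
    fun x hx => (hD3 x (hmem hx)).hasDerivAt (hnhds hx)
  have cf : ContinuousOn f (Ico 0 Y) := fun x hx => (hD0 x hx).continuousWithinAt
  have cf1 : ContinuousOn f1 (Ico 0 Y) := fun x hx => (hD1 x hx).continuousWithinAt
  have cf2 : ContinuousOn f2 (Ico 0 Y) := fun x hx => (hD2 x hx).continuousWithinAt
  have cf3 : ContinuousOn f3 (Ico 0 Y) := fun x hx => (hD3 x hx).continuousWithinAt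
  set hh : ℝ → ℝ := fun y => f y - y * f1 y with hh_def
  set G : ℝ → ℝ := fun y => f y ^ m * f3 y with G_def
  set Phi : ℝ → ℝ := fun y => 2 * f y - y * f1 y with Phi_def
  set Xi : ℝ → ℝ := fun y =>
    y * f2 y * G y - f1 y * G y - α * (hh y * hh y) / 2 + α * (f y * f y) / 2 with Xi_def
  have chh : ContinuousOn hh (Ico 0 Y) := cf.sub (continuousOn_id.mul cf1)
  have cG : ContinuousOn G (Ico 0 Y) :=
    (cf.rpow_const (fun x hx => Or.inl (ne_of_gt (hpos x hx)))).mul cf3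
  have cPhi : ContinuousOn Phi (Ico 0 Y) :=
    (continuousOn_const.mul cf).sub (continuousOn_id.mul cf1)
  have cXi : ContinuousOn Xi (Ico 0 Y) :=
    ((((continuousOn_id.mul cf2).mul cG).sub (cf1.mul cG)).sub
      ((continuousOn_const.mul (chh.mul chh)).div_const 2)).add
      ((continuousOn_const.mul (cf.mul cf)).div_const 2)
  have hdHH : ∀ x ∈ Ioo (0:ℝ) Y, HasDerivAt hh (-(x * f2 x)) x := by
    intro x hx
    have h1 : HasDerivAt (fun y => f y - y * f1 y) (f1 x - (1 * f1 x + x * f2 x)) x :=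
      (hdf x hx).sub ((hasDerivAt_id x).mul (hdf1 x hx))
    rw [hh_def]
    convert h1 using 1
    ring
  have hdG : ∀ x ∈ Ioo (0:ℝ) Y, HasDerivAt G (-α * hh x) x := by
    intro x hx
    have hfx : 0 < f x := hpos x (hmem hx)
    have h1 : HasDerivAt (fun y => f y ^ m) (f1 x * m * f x ^ (m-1)) x :=
      (hdf x hx).rpow_const (Or.inl (ne_of_gt hfx))
    have h2 : HasDerivAt G (f1 x * m * f x ^ (m-1) * f3 x + f x ^ m * f4 x) x := by
      rw [G_def]; exact h1.mul (hdf3 x hx)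
    have h3 := hODE x hx
    have h4 : f1 x * m * f x ^ (m-1) * f3 x + f x ^ m * f4 x = -α * hh x := by
      simp only [hh_def]
      linear_combination h3
    rwa [h4] at h2
  have hdPhi : ∀ x ∈ Ioo (0:ℝ) Y, HasDerivAt Phi (f1 x - x * f2 x) x := by
    intro x hx
    have h1 : HasDerivAt (fun y => 2 * f y - y * f1 y) (2 * f1 x - (1 * f1 x + x * f2 x)) x :=
      ((hdf x hx).const_mul 2).sub ((hasDerivAt_id x).mul (hdf1 x hx))
    rw [Phi_def]
    convert h1 using 1
    ring
  have hdXi : ∀ x ∈ Ioo (0:ℝ) Y,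
      HasDerivAt Xi (x * (f3 x * G x) + α * f1 x * Phi x) x := by
    intro x hx
    have h1 : HasDerivAt (fun y => y * f2 y * G y)
        ((1 * f2 x + x * f3 x) * G x + x * f2 x * (-α * hh x)) x :=
      (((hasDerivAt_id x).mul (hdf2 x hx)).mul (hdG x hx))
    have h2 : HasDerivAt (fun y => f1 y * G y) (f2 x * G x + f1 x * (-α * hh x)) x :=
      (hdf1 x hx).mul (hdG x hx)
    have h3 : HasDerivAt (fun y => α * (hh y * hh y) / 2)
        (α * (-(x * f2 x) * hh x + hh x * -(x * f2 x)) / 2) x :=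
      (((hdHH x hx).mul (hdHH x hx)).const_mul α).div_const 2
    have h4 : HasDerivAt (fun y => α * (f y * f y) / 2)
        (α * (f1 x * f x + f x * f1 x) / 2) x :=
      (((hdf x hx).mul (hdf x hx)).const_mul α).div_const 2
    have h5 := ((h1.sub h2).sub h3).add h4
    rw [Xi_def]
    refine h5.congr_deriv ?_
    simp only [Phi_def, hh_def]
    ring
  -- basic membership facts
  have hIccYs : Icc (0:ℝ) ys ⊆ Ico 0 Y := fun t ht => ⟨ht.1, lt_of_le_of_lt ht.2 hysY⟩
  have h0mem : (0:ℝ) ∈ Ico 0 Y := ⟨le_refl 0, hY⟩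
  -- value of f4 at 0
  have hf40 : f4 0 = -α := by
    set L : ℝ → ℝ := fun y =>
      α * (f y - y * f1 y) + m * f y ^ (m - 1) * f1 y * f3 y + f y ^ m * f4 y with L_def
    have hL : ContinuousOn L (Ico 0 Y) := by
      apply ContinuousOn.add
      apply ContinuousOn.add
      · exact continuousOn_const.mul (cf.sub (continuousOn_id.mul cf1))
      · exact ((continuousOn_const.mul
          (cf.rpow_const (fun x hx => Or.inl (ne_of_gt (hpos x hx))))).mul cf1).mul cf3
      · exact (cf.rpow_const (fun x hx => Or.inl (ne_of_gt (hpos x hx)))).mul hCf4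
    haveI hne : (𝓝[Ioo (0:ℝ) Y] 0).NeBot := by
      rw [nhdsWithin_Ioo_eq_nhdsGT hY]; infer_instance
    have t1 : Tendsto L (𝓝[Ioo (0:ℝ) Y] 0) (𝓝 (L 0)) :=
      (hL 0 h0mem).mono Ioo_subset_Ico_self
    have t2 : Tendsto L (𝓝[Ioo (0:ℝ) Y] 0) (𝓝 0) := by
      apply Tendsto.congr' _ tendsto_const_nhds
      filter_upwards [self_mem_nhdsWithin] with y hy
      exact (hODE y hy).symm
    have hL0 : L 0 = 0 := tendsto_nhds_unique t1 t2
    rw [L_def] at hL0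
    simp only [hf0, hf1, hf3, Real.one_rpow, mul_zero, zero_mul, mul_one, sub_zero,
      add_zero, zero_add, one_mul] at hL0
    linarith
  -- f3 is negative just after 0
  have hf4ev : ∀ᶠ t in 𝓝[≥] (0:ℝ), f4 t < 0 := by
    have h1 : Tendsto f4 (𝓝[Ico (0:ℝ) Y] 0) (𝓝 (f4 0)) := hCf4 0 h0mem
    rw [nhdsWithin_Ico_eq_nhdsGE hY] at h1
    exact h1.eventually_lt_const (by rw [hf40]; linarith)
  obtain ⟨u, hu0, huss⟩ := mem_nhdsGE_iff_exists_Icc_subset.mp hf4ev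
  set δ0 : ℝ := min u ys with δ0_def
  have hδ0pos : 0 < δ0 := lt_min hu0 hys0
  have hδ0ys : δ0 ≤ ys := min_le_right _ _
  have hδ0sub : Icc (0:ℝ) δ0 ⊆ Ico 0 Y := fun t ht =>
    hIccYs ⟨ht.1, le_trans ht.2 hδ0ys⟩
  have hf3anti : StrictAntiOn f3 (Icc 0 δ0) := by
    apply myStrictAnti (F' := f4) (cf3.mono hδ0sub)
    · intro x hx
      exact hdf3 x ⟨hx.1, lt_of_le_of_lt (le_of_lt hx.2) (lt_of_le_of_lt hδ0ys hysY)⟩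
    · intro x hx
      exact huss ⟨le_of_lt hx.1, le_trans (le_of_lt hx.2) (min_le_left _ _)⟩
  have hf3neg : ∀ t, 0 < t → t ≤ δ0 → f3 t < 0 := by
    intro t ht0 htδ
    have := hf3anti (left_mem_Icc.mpr (le_of_lt hδ0pos)) ⟨le_of_lt ht0, htδ⟩ ht0
    rwa [hf3] at this
  -- the last point w before which f1 is nonnegative
  set K : Set ℝ := {y | y ∈ Icc (0:ℝ) ys ∧ ∀ t ∈ Icc (0:ℝ) y, 0 ≤ f1 t} with K_def
  have hK0 : (0:ℝ) ∈ K := by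
    refine ⟨⟨le_refl 0, le_of_lt hys0⟩, fun t ht => ?_⟩
    have : t = 0 := le_antisymm ht.2 ht.1
    rw [this, hf1]
  have hKne : K.Nonempty := ⟨0, hK0⟩
  have hKbdd : BddAbove K := ⟨ys, fun y hy => hy.1.2⟩
  set w : ℝ := sSup K with w_def
  have hw0 : 0 ≤ w := le_csSup hKbdd hK0
  have hwys : w ≤ ys := csSup_le hKne (fun y hy => hy.1.2)
  have hwY : w < Y := lt_of_le_of_lt hwys hysY
  have hwIco : w ∈ Ico (0:ℝ) Y := ⟨hw0, hwY⟩
  have hf1lt : ∀ t, 0 ≤ t → t < w → 0 ≤ f1 t := by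
    intro t ht0 htw
    obtain ⟨y, hyK, hty⟩ := exists_lt_of_lt_csSup hKne htw
    exact hyK.2 t ⟨ht0, le_of_lt hty⟩
  have hf1nn : ∀ t ∈ Icc (0:ℝ) w, 0 ≤ f1 t := by
    rintro t ⟨ht0, htw⟩
    rcases lt_or_eq_of_le htw with h | h
    · exact hf1lt t ht0 h
    · subst h
      rcases eq_or_lt_of_le ht0 with h0 | h0
      · rw [← h0, hf1]
      · haveI : (𝓝[Ioo (0:ℝ) w] w).NeBot := by
          rw [nhdsWithin_Ioo_eq_nhdsLT h0]; infer_instance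
        have hsub : Ioo (0:ℝ) w ⊆ Ico 0 Y := fun x hx =>
          ⟨le_of_lt hx.1, lt_trans hx.2 hwY⟩
        have t1 : Tendsto f1 (𝓝[Ioo (0:ℝ) w] w) (𝓝 (f1 w)) :=
          (cf1 w hwIco).mono hsub
        refine ge_of_tendsto t1 ?_
        filter_upwards [self_mem_nhdsWithin] with x hx
        exact hf1lt x (le_of_lt hx.1) hx.2
  have hwys' : w < ys := by
    rcases lt_or_eq_of_le hwys with h | h
    · exact h
    · exfalso
      have := hf1nn ys ⟨le_of_lt hys0, le_of_eq h.symm⟩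
      linarith
  have hf1w : f1 w = 0 := by
    refine le_antisymm ?_ (hf1nn w ⟨hw0, le_refl w⟩)
    by_contra hpos'
    push_neg at hpos'
    have hev : ∀ᶠ t in 𝓝[Icc w ys] w, 0 < f1 t := by
      have h1 : Tendsto f1 (𝓝[Icc w ys] w) (𝓝 (f1 w)) :=
        (cf1 w hwIco).mono (fun t ht => hIccYs ⟨le_trans hw0 ht.1, ht.2⟩)
      exact h1.eventually_const_lt hpos'
    rw [nhdsWithin_Icc_eq_nhdsGE hwys'] at hev
    obtain ⟨v, hv, hvss⟩ := mem_nhdsGE_iff_exists_Icc_subset.mp hev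
    set w' : ℝ := min v ys with w'_def
    have hww' : w < w' := lt_min hv hwys'
    have hw'K : w' ∈ K := by
      refine ⟨⟨le_trans hw0 (le_of_lt hww'), min_le_right _ _⟩, fun t ht => ?_⟩
      rcases le_or_gt t w with h | h
      · exact hf1nn t ⟨ht.1, h⟩
      · exact le_of_lt (hvss ⟨le_of_lt h, le_trans ht.2 (min_le_left _ _)⟩)
    have := le_csSup hKbdd hw'K
    rw [← w_def] at this
    linarith
  have hfw : 0 < f w := hpos w hwIco
  have hhw : hh w = f w := by simp [hh_def, hf1w]
  -- approach by negative values of f1 from the right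
  have hneg_app : ∀ ε : ℝ, 0 < ε → ∃ t, w < t ∧ t < w + ε ∧ t < ys ∧ f1 t < 0 := by
    intro ε hε
    set q : ℝ := w + min (ε / 2) ((ys - w) / 2) with q_def
    have hq1 : w < q := by
      have h : 0 < min (ε / 2) ((ys - w) / 2) := lt_min (by linarith) (by linarith)
      rw [q_def]; linarith
    have hq2 : q < w + ε := by
      have h : min (ε / 2) ((ys - w) / 2) ≤ ε / 2 := min_le_left _ _
      rw [q_def]; linarith
    have hq3 : q < ys := by
      have h : min (ε / 2) ((ys - w) / 2) ≤ (ys - w) / 2 := min_le_right _ _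
      rw [q_def]; linarith
    have hqK : q ∉ K := by
      intro hq
      have := le_csSup hKbdd hq
      rw [← w_def] at this
      linarith
    rw [K_def] at hqK
    simp only [mem_setOf_eq, not_and, not_forall] at hqK
    obtain ⟨t, ht, hft⟩ := hqK ⟨by linarith, le_of_lt hq3⟩
    push_neg at hft
    have htw : w < t := by
      by_contra hle
      push_neg at hle
      have := hf1nn t ⟨ht.1, hle⟩
      linarith
    exact ⟨t, htw, lt_of_le_of_lt ht.2 hq2, lt_of_le_of_lt ht.2 hq3, hft⟩
  -- f2 w ≤ 0
  have hf2w : f2 w ≤ 0 := by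
    have hex : ∀ n : ℕ, ∃ t, w < t ∧ t < w + (ys - w) / (n + 1) ∧ t < ys ∧ f1 t < 0 :=
      fun n => hneg_app _ (div_pos (by linarith) (by positivity))
    choose v hv1 hv2 hv3 hv4 using hex
    have hslope : Tendsto (slope f1 w) (𝓝[Ioo w ys] w) (𝓝 (f2 w)) := by
      have h1 : HasDerivWithinAt f1 (f2 w) (Ico 0 Y) w := hD1 w hwIco
      rw [hasDerivWithinAt_iff_tendsto_slope] at h1
      exact h1.mono_left (nhdsWithin_mono _
        (fun x hx => ⟨⟨le_trans hw0 (le_of_lt hx.1), lt_trans hx.2 hysY⟩, ne_of_gt hx.1⟩))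
    have hvlim : Tendsto v atTop (𝓝[Ioo w ys] w) := by
      apply tendsto_nhdsWithin_of_tendsto_nhds_of_eventually_within
      · apply tendsto_of_tendsto_of_tendsto_of_le_of_le
          (tendsto_const_nhds : Tendsto (fun _ : ℕ => w) atTop (𝓝 w)) ?_
          (fun n => le_of_lt (hv1 n)) (fun n => le_of_lt (hv2 n))
        have h2 : Tendsto (fun n : ℕ => (ys - w) / (n + 1)) atTop (𝓝 0) := by
          apply Tendsto.div_atTop (tendsto_const_nhds : Tendsto (fun _ : ℕ => ys - w) atTop (𝓝 (ys - w)))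
          have := tendsto_atTop_add_const_right atTop (1:ℝ) tendsto_natCast_atTop_atTop
          exact this
        have := h2.const_add w
        simpa using this
      · exact Eventually.of_forall (fun n => ⟨hv1 n, hv3 n⟩)
    have hcomp : Tendsto (fun n => slope f1 w (v n)) atTop (𝓝 (f2 w)) :=
      hslope.comp hvlim
    refine le_of_tendsto hcomp (Eventually.of_forall (fun n => ?_))
    rw [slope_def_field, div_eq_inv_mul]
    apply mul_nonpos_of_nonneg_of_nonpos
    · rw [inv_nonneg]; linarith [hv1 n]
    · rw [hf1w]; linarith [hv4 n]
  -- generic facts about G vs f3 sign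
  have hfmpos : ∀ x ∈ Ico (0:ℝ) Y, 0 < f x ^ m :=
    fun x hx => Real.rpow_pos_of_pos (hpos x hx) m
  have hGeq : ∀ x : ℝ, G x = f x ^ m * f3 x := fun x => by rw [G_def]
  have hf3pos_ofG : ∀ x ∈ Ico (0:ℝ) Y, 0 < G x → 0 < f3 x := by
    intro x hx hG
    by_contra hcc; push_neg at hcc
    have h1 := mul_nonpos_of_nonneg_of_nonpos (le_of_lt (hfmpos x hx)) hcc
    rw [← hGeq x] at h1; linarith
  have hf3neg_ofG : ∀ x ∈ Ico (0:ℝ) Y, G x < 0 → f3 x < 0 := by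
    intro x hx hG
    by_contra hcc; push_neg at hcc
    have h1 := mul_nonneg (le_of_lt (hfmpos x hx)) hcc
    rw [← hGeq x] at h1; linarith
  have hf3le_ofG : ∀ x ∈ Ico (0:ℝ) Y, G x ≤ 0 → f3 x ≤ 0 := by
    intro x hx hG
    by_contra hcc; push_neg at hcc
    have h1 := mul_pos (hfmpos x hx) hcc
    rw [← hGeq x] at h1; linarith
  have hf3G_nonneg : ∀ x ∈ Ico (0:ℝ) Y, 0 ≤ f3 x * G x := by
    intro x hx
    have h2 := hfmpos x hx
    have h3 : f3 x * G x = f x ^ m * (f3 x * f3 x) := by rw [hGeq x]; ring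
    rw [h3]
    exact mul_nonneg (le_of_lt h2) (mul_self_nonneg _)
  have hIccW : Icc (0:ℝ) w ⊆ Ico 0 Y := fun t ht => ⟨ht.1, lt_of_le_of_lt ht.2 hwY⟩
  have hXi0 : Xi 0 = 0 := by
    simp only [Xi_def, hh_def]
    rw [hf0, hf1]
    ring
  -- positivity of Xi at right endpoints
  have hXiPos : ∀ b : ℝ, 0 < b → b ≤ w → (∀ t ∈ Icc (0:ℝ) b, 0 ≤ Phi t) → 0 < Xi b := by
    intro b hb0 hbw hPhi
    have hsubb : Icc (0:ℝ) b ⊆ Ico 0 Y := fun t ht => hIccW ⟨ht.1, le_trans ht.2 hbw⟩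
    have hbY : b < Y := lt_of_le_of_lt hbw hwY
    have hmono : MonotoneOn Xi (Icc 0 b) := by
      apply myMono (F' := fun x => x * (f3 x * G x) + α * f1 x * Phi x) (cXi.mono hsubb)
      · intro x hx; exact hdXi x ⟨hx.1, lt_trans hx.2 hbY⟩
      · intro x hx
        have hx' : x ∈ Ico (0:ℝ) Y := ⟨le_of_lt hx.1, lt_trans hx.2 hbY⟩
        apply add_nonneg
        · exact mul_nonneg (le_of_lt hx.1) (hf3G_nonneg x hx')
        · exact mul_nonneg (mul_nonneg (le_of_lt hα)
            (hf1nn x ⟨le_of_lt hx.1, le_trans (le_of_lt hx.2) hbw⟩))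
            (hPhi x ⟨le_of_lt hx.1, le_of_lt hx.2⟩)
    set d2 : ℝ := min δ0 b with d2_def
    set d1 : ℝ := d2 / 2 with d1_def
    have hd2pos : 0 < d2 := lt_min hδ0pos hb0
    have hd2δ : d2 ≤ δ0 := min_le_left _ _
    have hd2b : d2 ≤ b := min_le_right _ _
    have hd1pos : 0 < d1 := by rw [d1_def]; linarith
    have hd12 : d1 < d2 := by rw [d1_def]; linarith
    have hsubd : Icc d1 d2 ⊆ Ico (0:ℝ) Y := fun t ht =>
      hsubb ⟨le_trans (le_of_lt hd1pos) ht.1, le_trans ht.2 hd2b⟩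
    have hstrict : StrictMonoOn Xi (Icc d1 d2) := by
      apply myStrictMono (F' := fun x => x * (f3 x * G x) + α * f1 x * Phi x) (cXi.mono hsubd)
      · intro x hx
        exact hdXi x ⟨lt_trans hd1pos hx.1, lt_of_lt_of_le (lt_of_lt_of_le hx.2 hd2b) (le_of_lt hbY)⟩
      · intro x hx
        have hx0 : 0 < x := lt_trans hd1pos hx.1
        have hx' : x ∈ Ico (0:ℝ) Y := hsubd ⟨le_of_lt hx.1, le_of_lt hx.2⟩
        have h3 : f3 x < 0 := hf3neg x hx0 (le_trans (le_of_lt hx.2) hd2δ)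
        have h4 : 0 < f3 x * G x := by
          have h5 : f3 x * G x = f x ^ m * (f3 x * f3 x) := by rw [hGeq x]; ring
          rw [h5]
          exact mul_pos (hfmpos x hx') (mul_pos_of_neg_of_neg h3 h3)
        have h6 : 0 ≤ α * f1 x * Phi x :=
          mul_nonneg (mul_nonneg (le_of_lt hα)
            (hf1nn x ⟨le_of_lt hx0, le_trans (le_of_lt (lt_of_lt_of_le hx.2 hd2b)) hbw⟩))
            (hPhi x ⟨le_of_lt hx0, le_trans (le_of_lt hx.2) hd2b⟩)
        linarith [mul_pos hx0 h4]
    have c1 : Xi 0 ≤ Xi d1 :=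
      hmono ⟨le_refl 0, le_of_lt hb0⟩
        ⟨le_of_lt hd1pos, le_trans (le_of_lt hd12) hd2b⟩ (le_of_lt hd1pos)
    have c2 : Xi d1 < Xi d2 :=
      hstrict ⟨le_refl d1, le_of_lt hd12⟩ ⟨le_of_lt hd12, le_refl d2⟩ hd12
    have c3 : Xi d2 ≤ Xi b :=
      hmono ⟨le_of_lt hd2pos, hd2b⟩ ⟨le_of_lt hb0, le_refl b⟩ hd2b
    linarith [hXi0]
  -- the crux : f3 w ≤ 0
  have hf3w : f3 w ≤ 0 := by
    by_contra hc; push_neg at hc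
    have hw0' : 0 < w := by
      rcases eq_or_lt_of_le hw0 with h | h
      · exfalso; rw [← h, hf3] at hc; linarith
      · exact h
    have hGw : 0 < G w := by rw [hGeq w]; exact mul_pos (hfmpos w hwIco) hc
    set T : Set ℝ := {y | y ∈ Icc (0:ℝ) w ∧ Phi y ≤ 0} with T_def
    rcases eq_empty_or_nonempty T with hTe | hTne
    · -- case (a) : Phi > 0 on [0,w]
      have hPhiPos : ∀ t ∈ Icc (0:ℝ) w, 0 ≤ Phi t := by
        intro t ht
        by_contra hcc; push_neg at hcc
        exact (eq_empty_iff_forall_notMem.mp hTe t) ⟨ht, le_of_lt hcc⟩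
      have hXiw := hXiPos w hw0' (le_refl w) hPhiPos
      have hXival : Xi w = w * f2 w * G w := by
        simp only [Xi_def]
        rw [hhw, hf1w]
        ring
      rw [hXival] at hXiw
      have h1 : w * f2 w ≤ 0 := mul_nonpos_of_nonneg_of_nonpos (le_of_lt hw0') hf2w
      have h2 : w * f2 w * G w ≤ 0 := mul_nonpos_iff.mpr (Or.inr ⟨h1, le_of_lt hGw⟩)
      linarith
    · -- case (b) : Phi reaches 0 at ξ, then invariance gives contradiction
      have hTclosed : IsClosed T := by
        have hTeq : T = Icc (0:ℝ) w ∩ Phi ⁻¹' (Iic 0) := by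
          ext y; simp [T_def]
        rw [hTeq]
        exact (cPhi.mono hIccW).preimage_isClosed_of_isClosed isClosed_Icc isClosed_Iic
      have hTbdd : BddBelow T := ⟨0, fun y hy => hy.1.1⟩
      set ξ : ℝ := sInf T with ξ_def
      have hξT : ξ ∈ T := hTclosed.csInf_mem hTne hTbdd
      obtain ⟨⟨hξ0, hξw⟩, hΦξle⟩ := hξT
      have hPhiPoslt : ∀ t, 0 ≤ t → t < ξ → 0 < Phi t := by
        intro t ht0 htξ
        by_contra hcc; push_neg at hcc
        have h1 : ξ ≤ t := by
          have := csInf_le hTbdd (show t ∈ T from ⟨⟨ht0, le_trans (le_of_lt htξ) hξw⟩, hcc⟩)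
          rw [← ξ_def] at this; exact this
        linarith
      have hξpos : 0 < ξ := by
        rcases eq_or_lt_of_le hξ0 with h | h
        · exfalso
          have hP0 : Phi 0 = 2 := by simp only [Phi_def]; rw [hf0, hf1]; ring
          rw [← h, hP0] at hΦξle; linarith
        · exact h
      have hξY : ξ < Y := lt_of_le_of_lt hξw hwY
      have hξIco : ξ ∈ Ico (0:ℝ) Y := ⟨hξ0, hξY⟩
      have hΦξ0 : Phi ξ = 0 := by
        refine le_antisymm hΦξle ?_
        haveI : (𝓝[Ioo (0:ℝ) ξ] ξ).NeBot := by
          rw [nhdsWithin_Ioo_eq_nhdsLT hξpos]; infer_instance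
        have t1 : Tendsto Phi (𝓝[Ioo (0:ℝ) ξ] ξ) (𝓝 (Phi ξ)) :=
          (cPhi ξ hξIco).mono (fun x hx => ⟨le_of_lt hx.1, lt_trans hx.2 hξY⟩)
        refine ge_of_tendsto t1 ?_
        filter_upwards [self_mem_nhdsWithin] with x hx
        exact le_of_lt (hPhiPoslt x (le_of_lt hx.1) hx.2)
      have hfξ : 0 < f ξ := hpos ξ hξIco
      have hhξ : hh ξ = - f ξ := by
        have h1 : Phi ξ = f ξ + hh ξ := by simp only [Phi_def, hh_def]; ring
        linarith
      have hf1ξ : 0 < f1 ξ := by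
        have h1 : 2 * f ξ - ξ * f1 ξ = 0 := by
          have : Phi ξ = 2 * f ξ - ξ * f1 ξ := by simp only [Phi_def]
          linarith
        nlinarith
      have hslopeξ : f1 ξ - ξ * f2 ξ ≤ 0 := by
        have h1 : HasDerivAt Phi (f1 ξ - ξ * f2 ξ) ξ := hdPhi ξ ⟨hξpos, hξY⟩
        rw [hasDerivAt_iff_tendsto_slope] at h1
        haveI : (𝓝[Ioo (0:ℝ) ξ] ξ).NeBot := by
          rw [nhdsWithin_Ioo_eq_nhdsLT hξpos]; infer_instance
        have h2 : Tendsto (slope Phi ξ) (𝓝[Ioo (0:ℝ) ξ] ξ) (𝓝 (f1 ξ - ξ * f2 ξ)) :=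
          h1.mono_left (nhdsWithin_mono _ (fun x hx => ne_of_lt hx.2))
        refine le_of_tendsto h2 ?_
        filter_upwards [self_mem_nhdsWithin] with x hx
        rw [slope_def_field, hΦξ0]
        apply div_nonpos_of_nonneg_of_nonpos
        · have := hPhiPoslt x (le_of_lt hx.1) hx.2; linarith
        · linarith [hx.2]
      have hXiξ := hXiPos ξ hξpos hξw (fun t ht => by
        rcases lt_or_eq_of_le ht.2 with h2 | h2
        · exact le_of_lt (hPhiPoslt t ht.1 h2)
        · rw [h2, hΦξ0])
      have hXival : Xi ξ = (ξ * f2 ξ - f1 ξ) * G ξ := by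
        simp only [Xi_def]
        rw [hhξ]
        ring
      rw [hXival] at hXiξ
      have hfac : 0 < ξ * f2 ξ - f1 ξ := by
        rcases lt_or_eq_of_le (show (0:ℝ) ≤ ξ * f2 ξ - f1 ξ by linarith) with h | h
        · exact h
        · exfalso; rw [← h, zero_mul] at hXiξ; linarith
      have hGξ : 0 < G ξ := by
        by_contra hcc; push_neg at hcc
        have := mul_nonpos_of_nonneg_of_nonpos (le_of_lt hfac) hcc
        linarith
      have hf2ξ : 0 < f2 ξ := by
        by_contra hcc; push_neg at hcc
        have := mul_nonpos_of_nonneg_of_nonpos (le_of_lt hξpos) hcc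
        linarith
      have hhξneg : hh ξ < 0 := by rw [hhξ]; linarith
      -- forward invariance of (f2 > 0, hh < 0, G > 0) on [ξ, w] : contradiction with f2 w ≤ 0
      set B : Set ℝ := {y | y ∈ Icc ξ w ∧ (f2 y ≤ 0 ∨ 0 ≤ hh y ∨ G y ≤ 0)} with B_def
      have hsubξw : Icc ξ w ⊆ Ico (0:ℝ) Y := fun t ht => hIccW ⟨le_trans hξ0 ht.1, ht.2⟩
      have hBclosed : IsClosed B := by
        have hBeq : B = (Icc ξ w ∩ f2 ⁻¹' (Iic 0)) ∪
            ((Icc ξ w ∩ hh ⁻¹' (Ici 0)) ∪ (Icc ξ w ∩ G ⁻¹' (Iic 0))) := by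
          ext y; simp only [B_def, mem_setOf_eq, mem_union, mem_inter_iff, mem_preimage,
            mem_Iic, mem_Ici]
          tauto
        rw [hBeq]
        exact ((cf2.mono hsubξw).preimage_isClosed_of_isClosed isClosed_Icc isClosed_Iic).union
          (((chh.mono hsubξw).preimage_isClosed_of_isClosed isClosed_Icc isClosed_Ici).union
            ((cG.mono hsubξw).preimage_isClosed_of_isClosed isClosed_Icc isClosed_Iic))
      have hBne : B.Nonempty := ⟨w, ⟨⟨hξw, le_refl w⟩, Or.inl hf2w⟩⟩
      have hBbdd : BddBelow B := ⟨ξ, fun y hy => hy.1.1⟩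
      set s : ℝ := sInf B with s_def
      have hsB : s ∈ B := hBclosed.csInf_mem hBne hBbdd
      obtain ⟨⟨hξs, hsw⟩, hsbad⟩ := hsB
      have hξs' : ξ < s := by
        rcases lt_or_eq_of_le hξs with h | h
        · exact h
        · exfalso
          rw [← h] at hsbad
          rcases hsbad with h1 | h1 | h1
          · linarith
          · linarith
          · linarith
      have hgood : ∀ t, ξ ≤ t → t < s → (0 < f2 t ∧ hh t < 0 ∧ 0 < G t) := by
        intro t ht1 ht2
        have htnB : t ∉ B := by
          intro htB
          have := csInf_le hBbdd htB
          rw [← s_def] at this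
          linarith
        rw [B_def] at htnB
        simp only [mem_setOf_eq, not_and, not_or, not_le] at htnB
        exact htnB ⟨ht1, le_trans (le_of_lt ht2) hsw⟩
      have hsubξs : Icc ξ s ⊆ Ico (0:ℝ) Y := fun t ht => hsubξw ⟨ht.1, le_trans ht.2 hsw⟩
      have hIooξs : ∀ x ∈ Ioo ξ s, x ∈ Ioo (0:ℝ) Y := fun x hx =>
        ⟨lt_trans hξpos hx.1, lt_of_le_of_lt (le_trans (le_of_lt hx.2) hsw) hwY⟩
      have hanti_hh : AntitoneOn hh (Icc ξ s) := by
        apply myAnti (F' := fun x => -(x * f2 x)) (chh.mono hsubξs)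
        · intro x hx; exact hdHH x (hIooξs x hx)
        · intro x hx
          have h1 := (hgood x (le_of_lt hx.1) hx.2).1
          have h2 : 0 < x := lt_trans hξpos hx.1
          exact neg_nonpos.mpr (le_of_lt (mul_pos h2 h1))
      have hmono_G : MonotoneOn G (Icc ξ s) := by
        apply myMono (F' := fun x => -α * hh x) (cG.mono hsubξs)
        · intro x hx; exact hdG x (hIooξs x hx)
        · intro x hx
          have h1 := (hgood x (le_of_lt hx.1) hx.2).2.1
          exact le_of_lt (mul_pos_of_neg_of_neg (neg_lt_zero.mpr hα) h1)
      have hmono_f2 : MonotoneOn f2 (Icc ξ s) := by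
        apply myMono (F' := f3) (cf2.mono hsubξs)
        · intro x hx; exact hdf2 x (hIooξs x hx)
        · intro x hx
          have h1 := (hgood x (le_of_lt hx.1) hx.2).2.2
          exact le_of_lt (hf3pos_ofG x (hsubξs ⟨le_of_lt hx.1, le_of_lt hx.2⟩) h1)
      have hmξ : ξ ∈ Icc ξ s := ⟨le_refl ξ, le_of_lt hξs'⟩
      have hms : s ∈ Icc ξ s := ⟨le_of_lt hξs', le_refl s⟩
      rcases hsbad with h1 | h1 | h1
      · linarith [hmono_f2 hmξ hms (le_of_lt hξs')]
      · linarith [hanti_hh hmξ hms (le_of_lt hξs')]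
      · linarith [hmono_G hmξ hms (le_of_lt hξs')]
  -- propagation of the good region (hh > 0, f2 ≤ 0, G ≤ 0) from w to ys
  have hGw_le : G w ≤ 0 := by
    rw [hGeq w]
    exact mul_nonpos_of_nonneg_of_nonpos (le_of_lt (hfmpos w hwIco)) hf3w
  have hhwpos : 0 < hh w := by rw [hhw]; exact hfw
  set C : Set ℝ := {y | y ∈ Icc w ys ∧
    ∀ t ∈ Icc w y, (0 < hh t ∧ f2 t ≤ 0 ∧ G t ≤ 0)} with C_def
  have hwC : w ∈ C := by
    refine ⟨⟨le_refl w, le_of_lt hwys'⟩, fun t ht => ?_⟩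
    have : t = w := le_antisymm ht.2 ht.1
    rw [this]
    exact ⟨hhwpos, hf2w, hGw_le⟩
  have hCne : C.Nonempty := ⟨w, hwC⟩
  have hCbdd : BddAbove C := ⟨ys, fun y hy => hy.1.2⟩
  set c : ℝ := sSup C with c_def
  have hc1 : w ≤ c := le_csSup hCbdd hwC
  have hc2 : c ≤ ys := csSup_le hCne (fun y hy => hy.1.2)
  have hcY : c < Y := lt_of_le_of_lt hc2 hysY
  have hcIco : c ∈ Ico (0:ℝ) Y := ⟨le_trans hw0 hc1, hcY⟩
  have hgoodc : ∀ t, w ≤ t → t < c → (0 < hh t ∧ f2 t ≤ 0 ∧ G t ≤ 0) := by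
    intro t ht1 ht2
    obtain ⟨y, hyC, hty⟩ := exists_lt_of_lt_csSup hCne (by rw [← c_def]; exact ht2)
    exact hyC.2 t ⟨ht1, le_of_lt hty⟩
  have hsubwc : Icc w c ⊆ Ico (0:ℝ) Y := fun t ht =>
    ⟨le_trans hw0 ht.1, lt_of_le_of_lt ht.2 hcY⟩
  have hcC : c ∈ C := by
    rcases eq_or_lt_of_le hc1 with h | h
    · rw [← h]; exact hwC
    · haveI : (𝓝[Ioo w c] c).NeBot := by
        rw [nhdsWithin_Ioo_eq_nhdsLT h]; infer_instance
      have hsub2 : Ioo w c ⊆ Ico (0:ℝ) Y := fun x hx =>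
        ⟨le_trans hw0 (le_of_lt hx.1), lt_trans hx.2 hcY⟩
      have hf2c : f2 c ≤ 0 := by
        have t1 : Tendsto f2 (𝓝[Ioo w c] c) (𝓝 (f2 c)) := (cf2 c hcIco).mono hsub2
        refine le_of_tendsto t1 ?_
        filter_upwards [self_mem_nhdsWithin] with x hx
        exact (hgoodc x (le_of_lt hx.1) hx.2).2.1
      have hGc : G c ≤ 0 := by
        have t1 : Tendsto G (𝓝[Ioo w c] c) (𝓝 (G c)) := (cG c hcIco).mono hsub2
        refine le_of_tendsto t1 ?_
        filter_upwards [self_mem_nhdsWithin] with x hx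
        exact (hgoodc x (le_of_lt hx.1) hx.2).2.2
      have hhc : 0 < hh c := by
        have hmono : MonotoneOn hh (Icc w c) := by
          apply myMono (F' := fun x => -(x * f2 x)) (chh.mono hsubwc)
          · intro x hx
            exact hdHH x ⟨lt_of_le_of_lt hw0 hx.1, lt_trans hx.2 hcY⟩
          · intro x hx
            have h1 := (hgoodc x (le_of_lt hx.1) hx.2).2.1
            have h2 : 0 ≤ x := le_trans hw0 (le_of_lt hx.1)
            exact neg_nonneg.mpr (mul_nonpos_of_nonneg_of_nonpos h2 h1)
        have := hmono ⟨le_refl w, le_of_lt h⟩ ⟨le_of_lt h, le_refl c⟩ (le_of_lt h)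
        linarith
      refine ⟨⟨hc1, hc2⟩, fun t ht => ?_⟩
      rcases lt_or_eq_of_le ht.2 with h2 | h2
      · exact hgoodc t ht.1 h2
      · rw [h2]; exact ⟨hhc, hf2c, hGc⟩
  have hcys : c = ys := by
    by_contra hne'
    have hcys' : c < ys := lt_of_le_of_ne hc2 hne'
    have hhcpos : 0 < hh c := (hcC.2 c ⟨hc1, le_refl c⟩).1
    have hev : ∀ᶠ t in 𝓝[Icc c ys] c, 0 < hh t := by
      have t1 : Tendsto hh (𝓝[Icc c ys] c) (𝓝 (hh c)) :=
        (chh c hcIco).mono (fun t ht => hIccYs ⟨le_trans (le_trans hw0 hc1) ht.1, ht.2⟩)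
      exact t1.eventually_const_lt hhcpos
    rw [nhdsWithin_Icc_eq_nhdsGE hcys'] at hev
    obtain ⟨v, hv, hvss⟩ := mem_nhdsGE_iff_exists_Icc_subset.mp hev
    set c' : ℝ := min v ys with c'_def
    have hcc' : c < c' := lt_min hv hcys'
    have hc'ys : c' ≤ ys := min_le_right _ _
    have hhpos' : ∀ t ∈ Icc c c', 0 < hh t := fun t ht =>
      hvss ⟨ht.1, le_trans ht.2 (min_le_left _ _)⟩
    have hsubcc' : Icc c c' ⊆ Ico (0:ℝ) Y := fun t ht =>
      ⟨le_trans (le_trans hw0 hc1) ht.1, lt_of_le_of_lt (le_trans ht.2 hc'ys) hysY⟩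
    have hIoocc' : ∀ x ∈ Ioo c c', x ∈ Ioo (0:ℝ) Y := fun x hx =>
      ⟨lt_of_le_of_lt (le_trans hw0 hc1) hx.1,
        lt_of_le_of_lt (le_trans (le_of_lt hx.2) hc'ys) hysY⟩
    have hGanti : AntitoneOn G (Icc c c') := by
      apply myAnti (F' := fun x => -α * hh x) (cG.mono hsubcc')
      · intro x hx; exact hdG x (hIoocc' x hx)
      · intro x hx
        have h1 := hhpos' x ⟨le_of_lt hx.1, le_of_lt hx.2⟩
        exact mul_nonpos_iff.mpr (Or.inr ⟨neg_nonpos.mpr (le_of_lt hα), le_of_lt h1⟩)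
    have hGcc' : ∀ t ∈ Icc c c', G t ≤ 0 := by
      intro t ht
      have h1 := hGanti ⟨le_refl c, le_of_lt hcc'⟩ ht ht.1
      have h2 := (hcC.2 c ⟨hc1, le_refl c⟩).2.2
      linarith
    have hf2anti : AntitoneOn f2 (Icc c c') := by
      apply myAnti (F' := f3) (cf2.mono hsubcc')
      · intro x hx; exact hdf2 x (hIoocc' x hx)
      · intro x hx
        exact hf3le_ofG x (hsubcc' ⟨le_of_lt hx.1, le_of_lt hx.2⟩)
          (hGcc' x ⟨le_of_lt hx.1, le_of_lt hx.2⟩)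
    have hf2cc' : ∀ t ∈ Icc c c', f2 t ≤ 0 := by
      intro t ht
      have h1 := hf2anti ⟨le_refl c, le_of_lt hcc'⟩ ht ht.1
      have h2 := (hcC.2 c ⟨hc1, le_refl c⟩).2.1
      linarith
    have hc'C : c' ∈ C := by
      refine ⟨⟨le_trans hc1 (le_of_lt hcc'), hc'ys⟩, fun t ht => ?_⟩
      rcases le_or_gt t c with h2 | h2
      · exact hcC.2 t ⟨ht.1, h2⟩
      · exact ⟨hhpos' t ⟨le_of_lt h2, ht.2⟩, hf2cc' t ⟨le_of_lt h2, ht.2⟩,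
          hGcc' t ⟨le_of_lt h2, ht.2⟩⟩
    have := le_csSup hCbdd hc'C
    rw [← c_def] at this
    linarith
  have hprops : ∀ t ∈ Icc w ys, 0 < hh t ∧ f2 t ≤ 0 ∧ G t ≤ 0 := by
    have h1 := hcC.2
    rw [hcys] at h1
    exact h1
  have hsubwys : Icc w ys ⊆ Ico (0:ℝ) Y := fun t ht =>
    ⟨le_trans hw0 ht.1, lt_of_le_of_lt ht.2 hysY⟩
  have hIoowys : ∀ x ∈ Ioo w ys, x ∈ Ioo (0:ℝ) Y := fun x hx =>
    ⟨lt_of_le_of_lt hw0 hx.1, lt_trans hx.2 hysY⟩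
  have hmw : w ∈ Icc w ys := ⟨le_refl w, le_of_lt hwys'⟩
  have hmys : ys ∈ Icc w ys := ⟨le_of_lt hwys', le_refl ys⟩
  have hGanti2 : StrictAntiOn G (Icc w ys) := by
    apply myStrictAnti (F' := fun x => -α * hh x) (cG.mono hsubwys)
    · intro x hx; exact hdG x (hIoowys x hx)
    · intro x hx
      have h1 := (hprops x ⟨le_of_lt hx.1, le_of_lt hx.2⟩).1
      exact mul_neg_of_neg_of_pos (neg_lt_zero.mpr hα) h1
  have hGys : G ys < 0 := by
    have := hGanti2 hmw hmys hwys'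
    linarith
  have hf3ys : f3 ys < 0 := hf3neg_ofG ys ⟨le_of_lt hys0, hysY⟩ hGys
  have hf2anti2 : StrictAntiOn f2 (Icc w ys) := by
    apply myStrictAnti (F' := f3) (cf2.mono hsubwys)
    · intro x hx; exact hdf2 x (hIoowys x hx)
    · intro x hx
      have h1 := hGanti2 hmw ⟨le_of_lt hx.1, le_of_lt hx.2⟩ hx.1
      exact hf3neg_ofG x (hsubwys ⟨le_of_lt hx.1, le_of_lt hx.2⟩) (by linarith)
  have hf2ys : f2 ys < 0 := by
    have := hf2anti2 hmw hmys hwys'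
    linarith
  refine ⟨?_, hf2ys, hf3ys⟩
  have h1 : ys * f1 ys < 0 := mul_neg_of_pos_of_neg hys0 hneg
  have h2 : 0 < f ys := hpos ys ⟨le_of_lt hys0, hysY⟩
  linarith
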